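/- Let G and H be two nonempty subsets of a reflexive Banach space E such that G is weakly closed, and let T be an almost cyclic contraction on G ∪ H that has the proximinal property on G ∪ H. Then there exists u ∈ G such that ‖u − Tu‖ = σ(Tu,G). -/

import Mathlib

open Metric Filter Set

/-- Distance between two sets: `σ(G,H) = inf {σ(u,v) : u ∈ G, v ∈ H}`. -/
noncomputable def setDist {E : Type*} [MetricSpace E] (G H : Set E) : ℝ :=
  sInf (Set.image2 dist G H)

/-- The pair `(G,H)` has property UC. -/
def PropUC {E : Type*} [MetricSpace E] (G H : Set E) : Prop :=
  ∀ u z v : ℕ → E, (∀ n, u n ∈ G) → (∀ n, z n ∈ G) → (∀ n, v n ∈ H) →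
    Tendsto (fun n => dist (u n) (v n)) atTop (nhds (setDist G H)) →
    Tendsto (fun n => dist (z n) (v n)) atTop (nhds (setDist G H)) →
    Tendsto (fun n => dist (u n) (z n)) atTop (nhds 0)

/-- The pair `(G,H)` has property strongly UC. -/
def PropSUC {E : Type*} [MetricSpace E] (G H : Set E) : Prop :=
  ∀ u z v : ℕ → E, (∀ n, u n ∈ G) → (∀ n, z n ∈ G) → (∀ n, v n ∈ H) →
    Tendsto (fun n => dist (u n) (v n) - Metric.infDist (v n) G) atTop (nhds 0) →
    Tendsto (fun n => dist (z n) (v n) - Metric.infDist (v n) G) atTop (nhds 0) →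
    Tendsto (fun n => dist (u n) (z n)) atTop (nhds 0)

/-- `T` is an almost cyclic contraction on `G ∪ H`: it is cyclic and there is
`β ∈ [0,1)` with `σ(Tu,Tv) ≤ β·σ(u,v) + (1−β)·σ(v,G)` for all `u ∈ G`, `v ∈ H`. -/
def AlmostCyclicContraction {E : Type*} [MetricSpace E] (G H : Set E) (T : E → E) : Prop :=
  Set.MapsTo T G H ∧ Set.MapsTo T H G ∧
    ∃ β : ℝ, 0 ≤ β ∧ β < 1 ∧ ∀ u ∈ G, ∀ v ∈ H,
      dist (T u) (T v) ≤ β * dist u v + (1 - β) * Metric.infDist v G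

/-- `T` has the proximinal property on `G ∪ H`. -/
def ProximinalProperty {E : Type*} [NormedAddCommGroup E] [NormedSpace ℝ E]
    (G H : Set E) (T : E → E) : Prop :=
  (∀ (x : ℕ → E) (x₀ : E), (∀ n, x n ∈ G) → x₀ ∈ G →
    (∀ f : E →L[ℝ] ℝ, Filter.Tendsto (fun n => f (x n)) Filter.atTop (nhds (f x₀))) →
    Filter.Tendsto (fun n => ‖x n - T (x n)‖ - Metric.infDist (T (x n)) G)
      Filter.atTop (nhds 0) →
    ‖x₀ - T x₀‖ = Metric.infDist (T x₀) G) ∧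
  (∀ (y : ℕ → E) (y₀ : E), (∀ n, y n ∈ H) → y₀ ∈ H →
    (∀ f : E →L[ℝ] ℝ, Filter.Tendsto (fun n => f (y n)) Filter.atTop (nhds (f y₀))) →
    Filter.Tendsto (fun n => ‖y n - T (y n)‖ - Metric.infDist (T (y n)) H)
      Filter.atTop (nhds 0) →
    ‖y₀ - T y₀‖ = Metric.infDist (T y₀) H)

open NormedSpace TopologicalSpace


/-- A functional vanishing on a closed subspace but not at a point outside it. -/
lemma aux_sep_functional {E : Type*} [NormedAddCommGroup E] [NormedSpace ℝ E]
    (F : Submodule ℝ E) (hFc : IsClosed (F : Set E)) {x : E} (hx : x ∉ F) :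
    ∃ f : E →L[ℝ] ℝ, (∀ y ∈ F, f y = 0) ∧ f x ≠ 0 := by
  obtain ⟨f, u, hfs, hux⟩ := geometric_hahn_banach_closed_point (F.convex) hFc hx
  have hvanish : ∀ y ∈ F, f y = 0 := by
    intro y hy
    by_contra hne
    have h1 : f (((u+1) / f y) • y) < u := hfs _ (F.smul_mem _ hy)
    rw [map_smul, smul_eq_mul, div_mul_cancel₀ _ hne] at h1
    linarith
  have h0 : (0:ℝ) < u := by simpa using hfs 0 F.zero_mem
  exact ⟨f, hvanish, ne_of_gt (h0.trans hux)⟩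

/-- If the dual of a real normed space is separable, so is the space. -/
lemma aux_separable_of_dual_separable (X : Type*) [NormedAddCommGroup X] [NormedSpace ℝ X]
    [SeparableSpace (StrongDual ℝ X)] : SeparableSpace X := by
  obtain ⟨s, hs_count, hs_dense⟩ := exists_countable_dense (StrongDual ℝ X)
  have hchoice : ∀ f : StrongDual ℝ X, ∃ z : X, ‖z‖ ≤ 1 ∧ ‖f‖ / 2 ≤ f z := by
    intro f
    rcases eq_or_lt_of_le (norm_nonneg f) with h0 | h0
    · exact ⟨0, by simp, by simp [← h0]⟩
    · obtain ⟨z, hz1, hz2⟩ := f.exists_lt_apply_of_lt_opNorm (r := ‖f‖ / 2) (by linarith)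
      rcases le_or_gt 0 (f z) with h | h
      · exact ⟨z, hz1.le, by rw [Real.norm_eq_abs, abs_of_nonneg h] at hz2; linarith⟩
      · refine ⟨-z, by simpa using hz1.le, ?_⟩
        rw [Real.norm_eq_abs, abs_of_neg h] at hz2
        rw [map_neg]; linarith
  choose z hz1 hz2 using hchoice
  set D : Set X := z '' s with hD
  have hDc : D.Countable := hs_count.image _
  set F : Submodule ℝ X := (Submodule.span ℝ D).topologicalClosure with hF
  have hFsep : IsSeparable (F : Set X) := by
    rw [hF, Submodule.topologicalClosure_coe]
    exact ((hDc.isSeparable).span).closure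
  suffices htop : F = ⊤ by
    rw [htop, Submodule.top_coe] at hFsep
    exact (isSeparable_univ_iff).1 hFsep
  by_contra hne
  obtain ⟨x, hx⟩ : ∃ x : X, x ∉ F := by
    by_contra h
    push_neg at h
    exact hne (Submodule.eq_top_iff'.2 h)
  obtain ⟨f, hf0, hfx⟩ := aux_sep_functional F (Submodule.isClosed_topologicalClosure _) hx
  have hfne : f ≠ 0 := by
    intro h; exact hfx (by simp [h])
  have hfnorm : 0 < ‖f‖ := norm_pos_iff.2 hfne
  -- pick g ∈ s with ‖g - f‖ < ‖f‖/3
  obtain ⟨g, hgs, hgf⟩ : ∃ g ∈ s, dist f g < ‖f‖ / 3 := by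
    have := hs_dense.exists_dist_lt f (by positivity : (0:ℝ) < ‖f‖/3)
    simpa [exists_prop] using this
  have hzg_mem : z g ∈ F := by
    apply Submodule.le_topologicalClosure
    exact Submodule.subset_span ⟨g, hgs, rfl⟩
  have hfz : f (z g) = 0 := hf0 _ hzg_mem
  have hgnorm : 2 * ‖f‖ / 3 ≤ ‖g‖ := by
    have h1 : ‖f - g‖ < ‖f‖ / 3 := by rwa [← dist_eq_norm]
    have h2 : ‖f‖ ≤ ‖f - g‖ + ‖g‖ := by
      calc ‖f‖ = ‖(f - g) + g‖ := by rw [sub_add_cancel]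
        _ ≤ ‖f - g‖ + ‖g‖ := norm_add_le _ _
    linarith
  have hupper : g (z g) < ‖f‖ / 3 := by
    have : g (z g) = (g - f) (z g) := by simp [hfz]
    rw [this]
    calc (g - f) (z g) ≤ ‖(g - f) (z g)‖ := le_abs_self _
      _ ≤ ‖g - f‖ * ‖z g‖ := (g - f).le_opNorm _
      _ ≤ ‖g - f‖ * 1 := by
          exact mul_le_mul_of_nonneg_left (hz1 g) (norm_nonneg _)
      _ < ‖f‖ / 3 := by rw [mul_one, norm_sub_rev, ← dist_eq_norm]; exact hgf
  have hlower : ‖f‖ / 3 ≤ g (z g) := le_trans (by linarith) (hz2 g)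
  linarith

set_option maxHeartbeats 1000000 in
/-- Bounded sequences in a reflexive space have weakly convergent subsequences. -/
lemma aux_weak_seq_compact {E : Type*} [NormedAddCommGroup E] [NormedSpace ℝ E]
    (href : Function.Surjective (inclusionInDoubleDual ℝ E))
    (x : ℕ → E) (M : ℝ) (hM : ∀ n, ‖x n‖ ≤ M) :
    ∃ (x₀ : E) (φ : ℕ → ℕ), StrictMono φ ∧
      ∀ f : E →L[ℝ] ℝ, Tendsto (fun k => f (x (φ k))) atTop (nhds (f x₀)) := by
  have hM0 : 0 ≤ M := (norm_nonneg _).trans (hM 0)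
  set F : Submodule ℝ E := (Submodule.span ℝ (Set.range x)).topologicalClosure with hFdef
  have hFc : IsClosed (F : Set E) := Submodule.isClosed_topologicalClosure _
  -- extension of functionals
  have hr_ext : ∀ g : StrongDual ℝ ↥F, ∃ f : StrongDual ℝ E, f.comp F.subtypeL = g := by
    intro g
    obtain ⟨f, hf, -⟩ := exists_extension_norm_eq F g
    exact ⟨f, by ext y; exact hf y⟩
  -- reflexivity of F
  have hFrefl : ∀ Φ : StrongDual ℝ (StrongDual ℝ ↥F), ∃ w : ↥F, ∀ g : StrongDual ℝ ↥F, g w = Φ g := by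
    intro Φ
    set R : StrongDual ℝ E →L[ℝ] StrongDual ℝ ↥F := (ContinuousLinearMap.compL ℝ ↥F E ℝ).flip F.subtypeL
      with hRdef
    obtain ⟨x₀, hx₀⟩ := href (Φ.comp R)
    have hx₀' : ∀ f : StrongDual ℝ E, f x₀ = Φ (f.comp F.subtypeL) := by
      intro f
      calc f x₀ = (inclusionInDoubleDual ℝ E x₀) f := rfl
        _ = (Φ.comp R) f := by rw [hx₀]
        _ = Φ (f.comp F.subtypeL) := rfl
    have hx₀F : x₀ ∈ F := by
      by_contra hx
      obtain ⟨f, hf0, hfx⟩ := aux_sep_functional F hFc hx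
      have hz : f.comp F.subtypeL = 0 := by
        ext y; exact hf0 y y.2
      have h2 := hx₀' f
      rw [hz] at h2
      simp only [map_zero] at h2
      exact hfx h2
    refine ⟨⟨x₀, hx₀F⟩, ?_⟩
    intro g
    obtain ⟨f, hf⟩ := hr_ext g
    calc g ⟨x₀, hx₀F⟩ = (f.comp F.subtypeL) ⟨x₀, hx₀F⟩ := by rw [hf]
      _ = f x₀ := rfl
      _ = Φ (f.comp F.subtypeL) := hx₀' f
      _ = Φ g := by rw [hf]
  -- separability
  have h1 : IsSeparable (F : Set E) := by
    rw [hFdef, Submodule.topologicalClosure_coe]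
    exact ((countable_range x).isSeparable.span).closure
  haveI hsF : SeparableSpace ↥F := h1.separableSpace
  haveI : SeparableSpace (StrongDual ℝ (StrongDual ℝ ↥F)) := by
    have hsurj : Function.Surjective (inclusionInDoubleDual ℝ ↥F) := by
      intro Φ
      obtain ⟨w, hw⟩ := hFrefl Φ
      exact ⟨w, by ext g; exact hw g⟩
    exact hsurj.denseRange.separableSpace (inclusionInDoubleDual ℝ ↥F).continuous
  haveI : SeparableSpace (StrongDual ℝ ↥F) := aux_separable_of_dual_separable (StrongDual ℝ ↥F)
  obtain ⟨s, hsc, hsd⟩ := exists_countable_dense (StrongDual ℝ ↥F)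
  obtain ⟨gs, hgs⟩ := hsc.exists_eq_range hsd.nonempty
  have hgsd : DenseRange gs := by rw [DenseRange, ← hgs]; exact hsd
  -- the sequence inside F
  set x' : ℕ → ↥F := fun n =>
    ⟨x n, Submodule.le_topologicalClosure _ (Submodule.subset_span ⟨n, rfl⟩)⟩ with hx'def
  have hx'M : ∀ n, ‖x' n‖ ≤ M := fun n => hM n
  have habs : ∀ (g : StrongDual ℝ ↥F) (n : ℕ), |g (x' n)| ≤ ‖g‖ * M := by
    intro g n
    calc |g (x' n)| = ‖g (x' n)‖ := rfl
      _ ≤ ‖g‖ * ‖x' n‖ := g.le_opNorm _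
      _ ≤ ‖g‖ * M := mul_le_mul_of_nonneg_left (hx'M n) (norm_nonneg g)
  -- diagonal subsequence via compactness of the product of intervals
  set K : Set (ℕ → ℝ) := Set.pi univ (fun j : ℕ => Icc (-(‖gs j‖ * M)) (‖gs j‖ * M)) with hKdef
  have hK : IsCompact K := isCompact_univ_pi (fun j => isCompact_Icc)
  have hyK : ∀ n, (fun j => gs j (x' n)) ∈ K := by
    intro n j _
    exact abs_le.1 (habs (gs j) n)
  obtain ⟨a, -, φ, hφ, hconv⟩ := hK.tendsto_subseq hyK
  have hcoord : ∀ j, Tendsto (fun k => gs j (x' (φ k))) atTop (nhds (a j)) := by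
    intro j
    rw [tendsto_pi_nhds] at hconv
    exact hconv j
  -- every functional converges along the subsequence
  have hcauchy : ∀ g : StrongDual ℝ ↥F, ∃ L, Tendsto (fun k => g (x' (φ k))) atTop (nhds L) := by
    intro g
    apply cauchySeq_tendsto_of_complete
    rw [Metric.cauchySeq_iff]
    intro ε hε
    obtain ⟨j, hj⟩ := hgsd.exists_dist_lt g (show (0:ℝ) < ε / (4 * (M + 1)) by positivity)
    have hclose : ∀ n, |g (x' n) - gs j (x' n)| ≤ ε / 4 := by
      intro n
      have h1 : |(g - gs j) (x' n)| ≤ ‖g - gs j‖ * M := habs _ n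
      have h2 : ‖g - gs j‖ < ε / (4 * (M + 1)) := by exact lt_of_eq_of_lt (dist_eq_norm g (gs j)).symm hj
      have h3 : ‖g - gs j‖ * M ≤ (ε / (4 * (M + 1))) * M :=
        mul_le_mul_of_nonneg_right h2.le hM0
      have h4 : (ε / (4 * (M + 1))) * M ≤ ε / 4 := by
        rw [div_mul_eq_mul_div, div_le_div_iff₀ (by positivity) (by norm_num)]
        nlinarith
      have h5 : (g - gs j) (x' n) = g (x' n) - gs j (x' n) := rfl
      rw [h5] at h1
      linarith
    have hCj : CauchySeq (fun k => gs j (x' (φ k))) := (hcoord j).cauchySeq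
    rw [Metric.cauchySeq_iff] at hCj
    obtain ⟨N, hN⟩ := hCj (ε / 3) (by positivity)
    refine ⟨N, fun m hm n hn => ?_⟩
    have e1 := hclose (φ m)
    have e2 := hclose (φ n)
    have e3 := hN m hm n hn
    rw [Real.dist_eq] at e3 ⊢
    calc |g (x' (φ m)) - g (x' (φ n))| ≤
        |g (x' (φ m)) - gs j (x' (φ m))| + |gs j (x' (φ m)) - gs j (x' (φ n))|
          + |gs j (x' (φ n)) - g (x' (φ n))| := by
          have := abs_sub_le (g (x' (φ m))) (gs j (x' (φ m))) (g (x' (φ n)))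
          have := abs_sub_le (gs j (x' (φ m))) (gs j (x' (φ n))) (g (x' (φ n)))
          linarith [abs_sub_le (g (x' (φ m))) (gs j (x' (φ m))) (gs j (x' (φ n))),
            abs_sub_le (gs j (x' (φ m))) (gs j (x' (φ n))) (g (x' (φ n)))]
      _ < ε := by
          rw [abs_sub_comm (gs j (x' (φ n))) (g (x' (φ n)))] at *
          linarith
  choose lim hlim using hcauchy
  have hadd : ∀ g h : StrongDual ℝ ↥F, lim (g + h) = lim g + lim h := by
    intro g h
    have h0 := hlim (g + h)
    have heq : (fun k => (g + h) (x' (φ k))) = fun k => g (x' (φ k)) + h (x' (φ k)) := by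
      funext k; simp only [ContinuousLinearMap.add_apply]
    rw [heq] at h0
    exact tendsto_nhds_unique h0 ((hlim g).add (hlim h))
  have hsmul : ∀ (c : ℝ) (g : StrongDual ℝ ↥F), lim (c • g) = c * lim g := by
    intro c g
    have h0 := hlim (c • g)
    have heq : (fun k => (c • g) (x' (φ k))) = fun k => c * g (x' (φ k)) := by
      funext k; simp only [ContinuousLinearMap.smul_apply, smul_eq_mul]
    rw [heq] at h0
    exact tendsto_nhds_unique h0 ((hlim g).const_mul c)
  have hbound : ∀ g : StrongDual ℝ ↥F, ‖lim g‖ ≤ M * ‖g‖ := by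
    intro g
    have h1 : Tendsto (fun k => |g (x' (φ k))|) atTop (nhds |lim g|) := (hlim g).abs
    have h2 : ∀ k, |g (x' (φ k))| ≤ M * ‖g‖ := by
      intro k
      rw [mul_comm]
      exact habs g (φ k)
    exact le_of_tendsto h1 (Eventually.of_forall h2)
  set Φ : StrongDual ℝ ↥F →L[ℝ] ℝ :=
    LinearMap.mkContinuous
      { toFun := lim, map_add' := hadd,
        map_smul' := by
          intro c g
          simp only [RingHom.id_apply, smul_eq_mul]
          exact hsmul c g } M hbound with hΦdef
  obtain ⟨w, hw⟩ := hFrefl Φ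
  refine ⟨(w : E), φ, hφ, ?_⟩
  intro f
  have h3 : f (w : E) = lim (f.comp F.subtypeL) := hw (f.comp F.subtypeL)
  have h4 := hlim (f.comp F.subtypeL)
  rw [h3]
  exact h4

set_option maxHeartbeats 1000000 in
/-- Let `G` and `H` be nonempty subsets of a reflexive Banach space (reflexivity: the
canonical inclusion into the double dual is surjective), with `G` weakly closed, and
let `T` be an almost cyclic contraction on `G ∪ H` having the proximinal property.
Then there is `u ∈ G` with `‖u − Tu‖ = σ(Tu,G)`. -/
theorem bestApprox_proximinalProperty {E : Type*} [NormedAddCommGroup E]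
    [NormedSpace ℝ E] [CompleteSpace E]
    (href : Function.Surjective (NormedSpace.inclusionInDoubleDual ℝ E))
    (G H : Set E) (hG : G.Nonempty) (hH : H.Nonempty)
    (hGwc : IsClosed ((toWeakSpace ℝ E) '' G))
    (T : E → E) (hT : AlmostCyclicContraction G H T)
    (hprox : ProximinalProperty G H T) :
    ∃ u ∈ G, ‖u - T u‖ = Metric.infDist (T u) G := by
  obtain ⟨u₀, hu₀⟩ := hG
  obtain ⟨hTGH, hTHG, β, hβ0, hβ1, hcontr⟩ := hT
  set q : ℕ → E := fun n => T^[n] u₀ with hqdef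
  have hq0 : q 0 = u₀ := rfl
  have hq_succ : ∀ n, q (n + 1) = T (q n) := fun n => Function.iterate_succ_apply' T n u₀
  -- parity memberships
  have hmem : ∀ k, q (2 * k) ∈ G ∧ q (2 * k + 1) ∈ H := by
    intro k
    induction k with
    | zero =>
      refine ⟨by simpa [hq0] using hu₀, ?_⟩
      have : (2 * 0 + 1) = 0 + 1 := by omega
      rw [this, hq_succ, hq0]
      exact hTGH hu₀
    | succ k ih =>
      have h1 : (2 * (k + 1)) = (2 * k + 1) + 1 := by omega
      have h2 : q (2 * (k + 1)) ∈ G := by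
        rw [h1, hq_succ]; exact hTHG ih.2
      exact ⟨h2, by rw [hq_succ]; exact hTGH h2⟩
  have hG2 : ∀ k, q (2 * k) ∈ G := fun k => (hmem k).1
  have hH2 : ∀ k, q (2 * k + 1) ∈ H := fun k => (hmem k).2
  set d : ℕ → ℝ := fun n => dist (q n) (q (n + 1)) with hddef
  have hσ_le : ∀ k, infDist (q (2 * k + 1)) G ≤ d (2 * k) := by
    intro k
    calc infDist (q (2 * k + 1)) G ≤ dist (q (2 * k + 1)) (q (2 * k)) :=
          infDist_le_dist_of_mem (hG2 k)
      _ = d (2 * k) := dist_comm _ _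
  have hstep_even : ∀ k, d (2 * k + 1) ≤ β * d (2 * k) + (1 - β) * infDist (q (2 * k + 1)) G := by
    intro k
    have h := hcontr (q (2 * k)) (hG2 k) (q (2 * k + 1)) (hH2 k)
    rw [← hq_succ (2 * k), ← hq_succ (2 * k + 1)] at h
    exact h
  have hstep_odd : ∀ k, d (2 * k + 2) ≤ d (2 * k + 1) := by
    intro k
    have hmemG : q (2 * k + 2) ∈ G := by
      have : 2 * k + 2 = 2 * (k + 1) := by omega
      rw [this]; exact hG2 (k + 1)
    have h := hcontr (q (2 * k + 2)) hmemG (q (2 * k + 1)) (hH2 k)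
    rw [← hq_succ (2 * k + 2), ← hq_succ (2 * k + 1)] at h
    have hσ : infDist (q (2 * k + 1)) G ≤ d (2 * k + 1) := by
      calc infDist (q (2 * k + 1)) G ≤ dist (q (2 * k + 1)) (q (2 * k + 2)) :=
            infDist_le_dist_of_mem hmemG
        _ = d (2 * k + 1) := rfl
    have hL : d (2 * k + 2) = dist (q (2 * k + 2 + 1)) (q (2 * k + 1 + 1)) := by
      rw [show (2:ℕ) * k + 1 + 1 = 2 * k + 2 from by omega]
      exact dist_comm _ _
    have hR : dist (q (2 * k + 2)) (q (2 * k + 1)) = d (2 * k + 1) := dist_comm _ _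
    rw [← hL, hR] at h
    nlinarith [dist_nonneg (x := q (2 * k + 1)) (y := q (2 * k + 2))]
  have hanti_succ : ∀ n, d (n + 1) ≤ d n := by
    intro n
    rcases Nat.even_or_odd n with he | ho
    · obtain ⟨k, hk⟩ := he
      have hk2 : n = 2 * k := by omega
      subst hk2
      have := hstep_even k
      have := hσ_le k
      nlinarith
    · obtain ⟨k, hk⟩ := ho
      subst hk
      exact hstep_odd k
  have hdanti : Antitone d := antitone_nat_of_succ_le hanti_succ
  have hd0 : ∀ n, 0 ≤ d n := fun n => dist_nonneg
  have hdbdd : BddBelow (range d) := ⟨0, fun r ⟨n, hn⟩ => hn ▸ hd0 n⟩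
  have hdL : Tendsto d atTop (nhds (⨅ n, d n)) := tendsto_atTop_ciInf hdanti hdbdd
  have hdL' : Tendsto (fun n => d (n + 1)) atTop (nhds (⨅ n, d n)) :=
    hdL.comp (tendsto_add_atTop_nat 1)
  have hdiff : Tendsto (fun n => d n - d (n + 1)) atTop (nhds 0) := by
    simpa using hdL.sub hdL'
  -- the error sequence at even indices
  set e : ℕ → ℝ := fun k => d (2 * k) - infDist (q (2 * k + 1)) G with hedef
  have he0 : ∀ k, 0 ≤ e k := fun k => by
    have := hσ_le k; simp only [hedef]; linarith
  have he_le : ∀ k, e k ≤ (d (2 * k) - d (2 * k + 1)) / (1 - β) := by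
    intro k
    rw [le_div_iff₀ (by linarith : (0:ℝ) < 1 - β)]
    have := hstep_even k
    simp only [hedef]
    nlinarith
  have h2k : Tendsto (fun k : ℕ => 2 * k) atTop atTop :=
    Filter.tendsto_atTop_atTop.mpr (fun b => ⟨b, fun a ha => by omega⟩)
  have hrhs : Tendsto (fun k => (d (2 * k) - d (2 * k + 1)) / (1 - β)) atTop (nhds 0) := by
    have h1 : Tendsto (fun k => d (2 * k) - d (2 * k + 1)) atTop (nhds 0) := hdiff.comp h2k
    simpa using h1.div_const (1 - β)
  have he_tends : Tendsto e atTop (nhds 0) := squeeze_zero he0 he_le hrhs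
  -- boundedness
  set B : ℝ := 2 * d 0 / (1 - β) with hBdef
  have ha_bdd : ∀ k, dist u₀ (q (2 * k)) ≤ B := by
    intro k
    induction k with
    | zero =>
      have h1 : dist u₀ (q (2 * 0)) = 0 := by
        rw [show 2 * 0 = 0 from rfl, hq0, dist_self]
      rw [h1, hBdef]
      exact div_nonneg (by linarith [hd0 0]) (by linarith)
    | succ k ih =>
      have h := hcontr u₀ hu₀ (q (2 * k + 1)) (hH2 k)
      have hTq : T (q (2 * k + 1)) = q (2 * k + 2) := (hq_succ (2 * k + 1)).symm
      have hTu : T u₀ = q 1 := by rw [← hq0]; exact (hq_succ 0).symm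
      rw [hTq, hTu] at h
      have htri1 : dist u₀ (q (2 * (k + 1))) ≤ dist u₀ (q 1) + dist (q 1) (q (2 * k + 2)) := by
        rw [show 2 * (k + 1) = 2 * k + 2 from by omega]
        exact dist_triangle _ _ _
      have htri2 : dist u₀ (q (2 * k + 1)) ≤ dist u₀ (q (2 * k)) + d (2 * k) :=
        dist_triangle _ _ _
      have hd00 : dist u₀ (q 1) = d 0 := by simp [hddef, hq0]
      have hσ := hσ_le k
      have hdk : d (2 * k) ≤ d 0 := hdanti (Nat.zero_le _)
      have hβ' : (0:ℝ) < 1 - β := by linarith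
      have hd0' := hd0 0
      rw [hd00] at htri1
      have key : dist u₀ (q (2 * (k + 1))) ≤ β * dist u₀ (q (2 * k)) + 2 * d 0 := by
        nlinarith [infDist_nonneg (s := G) (x := q (2 * k + 1))]
      have : β * dist u₀ (q (2 * k)) + 2 * d 0 ≤ B := by
        rw [hBdef]
        rw [le_div_iff₀ (by linarith : (0:ℝ) < 1 - β)] at ih ⊢
        nlinarith [dist_nonneg (x := u₀) (y := q (2 * k))]
      linarith
  set M : ℝ := ‖u₀‖ + B with hMdef
  have hxM : ∀ k, ‖q (2 * k)‖ ≤ M := by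
    intro k
    calc ‖q (2 * k)‖ = dist (q (2 * k)) 0 := (dist_zero_right _).symm
      _ ≤ dist (q (2 * k)) u₀ + dist u₀ 0 := dist_triangle _ _ _
      _ = dist u₀ (q (2 * k)) + ‖u₀‖ := by rw [dist_comm, dist_zero_right]
      _ ≤ B + ‖u₀‖ := by linarith [ha_bdd k]
      _ = M := by rw [hMdef]; ring
  -- weak subsequential limit
  obtain ⟨x₀, φ, hφ, hconv⟩ := aux_weak_seq_compact href (fun k => q (2 * k)) M hxM
  -- x₀ ∈ G by weak closedness
  have hinj : Function.Injective ⇑(topDualPairing ℝ E).flip := by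
    intro u v huv
    have hfe : ∀ f : E →L[ℝ] ℝ, f u = f v := fun f => LinearMap.congr_fun huv f
    have hsub : ‖u - v‖ ≤ 0 := by
      apply norm_le_dual_bound ℝ (u - v) le_rfl
      intro f
      have : f (u - v) = 0 := by rw [map_sub, hfe f, sub_self]
      rw [this]
      simp
    have : u - v = 0 := by
      have := norm_nonneg (u - v)
      exact norm_eq_zero.1 (le_antisymm hsub this)
    exact sub_eq_zero.1 this
  have hWtend : Tendsto (fun k => toWeakSpace ℝ E (q (2 * φ k))) atTop
      (nhds (toWeakSpace ℝ E x₀)) := by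
    refine (WeakBilin.tendsto_iff_forall_eval_tendsto (B := (topDualPairing ℝ E).flip) hinj).2 ?_
    intro f
    exact hconv f
  have hx₀G : x₀ ∈ G := by
    have hx₀img : toWeakSpace ℝ E x₀ ∈ (toWeakSpace ℝ E) '' G := by
      rw [← hGwc.closure_eq]
      exact mem_closure_of_tendsto hWtend
        (Eventually.of_forall (fun k => mem_image_of_mem _ (hG2 (φ k))))
    obtain ⟨u, huG, hueq⟩ := hx₀img
    rwa [← (toWeakSpace ℝ E).injective hueq]
  -- apply the proximinal property
  refine ⟨x₀, hx₀G, ?_⟩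
  apply hprox.1 (fun k => q (2 * φ k)) x₀ (fun k => hG2 (φ k)) hx₀G hconv
  have heq : (fun k => ‖q (2 * φ k) - T (q (2 * φ k))‖ - infDist (T (q (2 * φ k))) G)
      = fun k => e (φ k) := by
    funext k
    simp only [hedef, hddef]
    rw [← hq_succ (2 * φ k), ← dist_eq_norm]
  rw [heq]
  exact he_tends.comp hφ.tendsto_atTop
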